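/- Let p ≥ 1 be a natural number and u = 2^{−(p+1)}. For t ∈ [−1,1] with t ≠ 0, and for a floating point number z(e,s,k) = (−1)^s · 2^e · (1 + k/2^p) with 0 ≤ k ≤ 2^p − 1 (not at the exponent boundaries), the condition 2^e(1 + (2k−1)/2^{p+1}) ≤ z(e,0,k)/(1−tu) ≤ 2^e(1 + (2k+1)/2^{p+1}) holds if and only if −2^{p+1}/(2^{p+1} + 2k − 1) ≤ t ≤ 2^{p+1}/(2^{p+1} + 2k + 1). -/

import Mathlib

theorem rounding_interval_iff (p : ℕ) (hp : 1 ≤ p) (u t : ℝ)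
    (hu : u = 1 / 2^(p+1)) (ht1 : -1 ≤ t) (ht2 : t ≤ 1) (ht0 : t ≠ 0)
    (e : ℤ) (k : ℕ) (hk1 : 1 ≤ k) (hk2 : k ≤ 2^p - 1)
    (z : ℝ) (hz : z = (2:ℝ)^e * (1 + (k : ℝ) / 2^p)) :
    ((2:ℝ)^e * (1 + (2*(k:ℝ) - 1) / 2^(p+1)) ≤ z / (1 - t*u) ∧
      z / (1 - t*u) ≤ (2:ℝ)^e * (1 + (2*(k:ℝ) + 1) / 2^(p+1))) ↔
    (-(2^(p+1) / (2^(p+1) + 2*(k:ℝ) - 1)) ≤ t ∧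
      t ≤ 2^(p+1) / (2^(p+1) + 2*(k:ℝ) + 1)) := by
  have hq : (0:ℝ) < 2^p := by positivity
  have hP : (0:ℝ) < 2^(p+1) := by positivity
  have hP4 : (4:ℝ) ≤ 2^(p+1) := by
    calc (4:ℝ) = 2^2 := by norm_num
    _ ≤ 2^(p+1) := by apply pow_le_pow_right₀ (by norm_num) (by omega)
  have hk0 : (1:ℝ) ≤ (k:ℝ) := by exact_mod_cast hk1
  have hu' : 0 < u := by rw [hu]; positivity
  have huu : u ≤ 1/4 := by
    rw [hu, div_le_div_iff₀ hP (by norm_num)]; linarith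
  have hden : 0 < 1 - t*u := by nlinarith
  have he : 0 < (2:ℝ)^e := zpow_pos (by norm_num) e
  have hD1 : (0:ℝ) < 2^(p+1) + 2*(k:ℝ) - 1 := by linarith
  have hD2 : (0:ℝ) < 2^(p+1) + 2*(k:ℝ) + 1 := by linarith
  have hpq : (2:ℝ)^(p+1) = 2 * 2^p := by ring
  rw [hz, le_div_iff₀ hden, div_le_iff₀ hden, mul_assoc, mul_assoc,
    mul_le_mul_iff_right₀ he, mul_le_mul_iff_right₀ he, hu,
    neg_le, le_div_iff₀ hD1, le_div_iff₀ hD2]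
  have hk2p : (k:ℝ)/2^p = 2*(k:ℝ)/2^(p+1) := by rw [hpq]; ring
  rw [hk2p]
  have hPne : ((2:ℝ)^(p+1)) ≠ 0 := by positivity
  rw [show (1:ℝ) - t*(1/2^(p+1)) = (2^(p+1) - t)/2^(p+1) by
        rw [eq_div_iff hPne]; field_simp,
      show (1:ℝ) + (2*(k:ℝ)-1)/2^(p+1) = (2^(p+1) + (2*(k:ℝ)-1))/2^(p+1) by
        rw [eq_div_iff hPne, add_mul, div_mul_cancel₀ _ hPne, one_mul],
      show (1:ℝ) + (2*(k:ℝ)+1)/2^(p+1) = (2^(p+1) + (2*(k:ℝ)+1))/2^(p+1) by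
        rw [eq_div_iff hPne, add_mul, div_mul_cancel₀ _ hPne, one_mul],
      show (1:ℝ) + 2*(k:ℝ)/2^(p+1) = (2^(p+1) + 2*(k:ℝ))/2^(p+1) by
        rw [eq_div_iff hPne, add_mul, div_mul_cancel₀ _ hPne, one_mul],
      div_mul_div_comm, div_mul_div_comm,
      div_le_div_iff₀ (by positivity) hP, div_le_div_iff₀ hP (by positivity)]
  constructor <;> rintro ⟨h1, h2⟩ <;> constructor <;>
    nlinarith [mul_pos hP hP, hP, mul_pos (mul_pos hP hP) hP]
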